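/- Let $n = 2m$ with $m \geq 3$ odd, $G = D_n$, $H = \langle xy \rangle$, and let $\varphi : P \to I_{G/H}$ be the $G$-homomorphism defined by $\varphi(\alpha_i) = f_i + f_{m+i}$, $\varphi(\beta_i) = -(f_i + f_{m+i})$ ($1 \leq i \leq m$), $\varphi(\gamma_j) = x^{j-1}(\sum_{l=1}^{m-1} f_l + f_{m+1})$ ($1 \leq j \leq n$). Then the following elements lie in the image of $\varphi$: (a) $\sum_{l=2}^{m-1} f_l = \varphi(\gamma_1) - \varphi(\alpha_1)$; (b) $f_m + f_{m+2} = -\varphi(\gamma_1) + \varphi(\alpha_1) + \varphi(\gamma_2)$; (c) $f_i + f_{i+2}$ for all $i$ (indices mod $n$); (d) $\sum_{l=i}^{i+3} f_l$ for all $i$; and consequently $f_1 \in \mathrm{Image}(\varphi)$ when $m \equiv 1 \pmod 4$ and $f_2 \in \mathrm{Image}(\varphi)$ when $m \equiv 3 \pmod 4$, whence $\varphi$ is surjective. -/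

import Mathlib

/-- For `n = 2m`, `m ≥ 3` odd, `G = D_n`, `H = ⟨xy⟩`, and the `G`-homomorphism
`φ : P → I_{G/H}` of the main construction: the elements
`Σ_{l=2}^{m-1} f_l = φ(γ₁) - φ(α₁)`,
`f_m + f_{m+2} = -φ(γ₁) + φ(α₁) + φ(γ₂)`, all `f_i + f_{i+2}`, all
`Σ_{l=i}^{i+3} f_l` lie in the image of `φ`; consequently `f₁ ∈ Image(φ)` when
`m ≡ 1 (mod 4)` and `f₂ ∈ Image(φ)` when `m ≡ 3 (mod 4)`, whence `φ` is surjective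
onto the augmentation sublattice. -/
theorem stmt_18 (m : ℕ) (hm : 3 ≤ m) (hodd : Odd m)
    (f : ZMod (2 * m) → (ZMod (2 * m) → ℤ))
    (hf : ∀ i, f i = Pi.single i 1 - Pi.single (i + 1) 1)
    (φ : ((ZMod m ⊕ ZMod m ⊕ ZMod (2 * m)) → ℤ) →ₗ[ℤ] (ZMod (2 * m) → ℤ))
    (hφa : ∀ i : ZMod m, φ (Pi.single (Sum.inl i) 1) =
      f (i.val : ZMod (2 * m)) + f ((m : ZMod (2 * m)) + (i.val : ZMod (2 * m))))
    (hφb : ∀ i : ZMod m, φ (Pi.single (Sum.inr (Sum.inl i)) 1) =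
      -(f (i.val : ZMod (2 * m)) + f ((m : ZMod (2 * m)) + (i.val : ZMod (2 * m)))))
    (hφc : ∀ j : ZMod (2 * m), φ (Pi.single (Sum.inr (Sum.inr j)) 1) =
      (∑ l ∈ Finset.range (m - 1), f (j + (l : ZMod (2 * m)))) + f (j + (m : ZMod (2 * m)))) :
    (∑ l ∈ Finset.Icc 2 (m - 1), f (l : ZMod (2 * m)) =
      φ (Pi.single (Sum.inr (Sum.inr (1 : ZMod (2 * m)))) 1)
        - φ (Pi.single (Sum.inl (1 : ZMod m)) 1)) ∧
    (f (m : ZMod (2 * m)) + f ((m : ZMod (2 * m)) + 2) =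
      -φ (Pi.single (Sum.inr (Sum.inr (1 : ZMod (2 * m)))) 1)
        + φ (Pi.single (Sum.inl (1 : ZMod m)) 1)
        + φ (Pi.single (Sum.inr (Sum.inr (2 : ZMod (2 * m)))) 1)) ∧
    (∀ i : ZMod (2 * m), f i + f (i + 2) ∈ LinearMap.range φ) ∧
    (∀ i : ZMod (2 * m), f i + f (i + 1) + f (i + 2) + f (i + 3) ∈ LinearMap.range φ) ∧
    (m % 4 = 1 → f 1 ∈ LinearMap.range φ) ∧
    (m % 4 = 3 → f 2 ∈ LinearMap.range φ) ∧
    LinearMap.range φ = Submodule.span ℤ (Set.range f) := by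
  haveI : NeZero m := ⟨by omega⟩
  haveI : NeZero (2 * m) := ⟨by omega⟩
  haveI : Fact (1 < m) := ⟨by omega⟩
  obtain ⟨t, ht⟩ := hodd
  set S := LinearMap.range φ with hS
  have hmm : (m : ZMod (2 * m)) + (m : ZMod (2 * m)) = 0 := by
    rw [← Nat.cast_add, ← two_mul, ZMod.natCast_self]
  have hm1 : m - 1 + 1 = m := by omega
  have hmsub : ((m - 1 : ℕ) : ZMod (2 * m)) = (m : ZMod (2 * m)) - 1 := by
    rw [Nat.cast_sub (by omega : 1 ≤ m), Nat.cast_one]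
  have hval1 : (1 : ZMod m).val = 1 := ZMod.val_one m
  -- telescoping lemma
  have tele : ∀ j : ZMod (2 * m),
      (∑ l ∈ Finset.range (m - 1), f (j + 1 + (l : ZMod (2 * m))))
      = (∑ l ∈ Finset.range (m - 1), f (j + (l : ZMod (2 * m))))
        + f (j + ((m - 1 : ℕ) : ZMod (2 * m))) - f j := by
    intro j
    have h1 : ∀ l ∈ Finset.range (m - 1), f (j + 1 + (l : ZMod (2 * m)))
        = f (j + (((l + 1 : ℕ)) : ZMod (2 * m))) := by
      intro l _; congr 1; push_cast; ring
    rw [Finset.sum_congr rfl h1]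
    have h2 := Finset.sum_range_succ' (fun l : ℕ => f (j + (l : ZMod (2 * m)))) (m - 1)
    rw [hm1] at h2
    have h3 := Finset.sum_range_succ (fun l : ℕ => f (j + (l : ZMod (2 * m)))) (m - 1)
    rw [hm1] at h3
    simp only [Nat.cast_zero, add_zero] at h2
    linear_combination h3 - h2
  -- the key combination computing f i + f (i+2)
  have hkey : ∀ (i j j' : ZMod (2 * m)) (c : ZMod m), j = i + 1 + (m : ZMod (2 * m)) →
      j' = j + 1 →
      (((c.val : ℕ) : ZMod (2 * m)) = j ∨
        ((c.val : ℕ) : ZMod (2 * m)) = j + (m : ZMod (2 * m))) →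
      -φ (Pi.single (Sum.inr (Sum.inr j)) 1) + φ (Pi.single (Sum.inl c) 1)
        + φ (Pi.single (Sum.inr (Sum.inr j')) 1) = f i + f (i + 2) := by
    intro i j j' c hj hj' hc
    subst hj'
    rw [hφc j, hφa c, hφc (j + 1), tele j]
    have e1 : j + ((m - 1 : ℕ) : ZMod (2 * m)) = i := by
      rw [hmsub, hj]; linear_combination hmm
    have e2 : j + (m : ZMod (2 * m)) = i + 1 := by rw [hj]; linear_combination hmm
    have e3 : j + 1 + (m : ZMod (2 * m)) = i + 2 := by rw [hj]; linear_combination hmm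
    have e4 : f ((c.val : ZMod (2 * m))) + f ((m : ZMod (2 * m)) + (c.val : ZMod (2 * m)))
        = f j + f (i + 1) := by
      rcases hc with hc | hc
      · rw [hc, add_comm (m : ZMod (2 * m)) j, e2]
      · have h5 : (m : ZMod (2 * m)) + (j + (m : ZMod (2 * m))) = j := by
          linear_combination hmm
        rw [hc, h5, e2]; exact add_comm _ _
    rw [e1, e2, e3, e4]
    ring
  have hpair : ∀ i : ZMod (2 * m), f i + f (i + 2) ∈ S := by
    intro i
    set j : ZMod (2 * m) := i + 1 + (m : ZMod (2 * m)) with hj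
    refine ⟨-Pi.single (Sum.inr (Sum.inr j)) 1 + Pi.single (Sum.inl ((j.val : ZMod m))) 1
      + Pi.single (Sum.inr (Sum.inr (j + 1))) 1, ?_⟩
    rw [map_add, map_add, map_neg]
    refine hkey i j (j + 1) _ hj rfl ?_
    have hv : ((j.val : ZMod m)).val = j.val % m := ZMod.val_natCast _ _
    have hjlt : j.val < 2 * m := ZMod.val_lt j
    have hjj : ((j.val : ℕ) : ZMod (2 * m)) = j := ZMod.natCast_rightInverse j
    rcases lt_or_ge j.val m with h | h
    · left; rw [hv, Nat.mod_eq_of_lt h, hjj]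
    · right
      rw [hv, Nat.mod_eq_sub_mod h, Nat.mod_eq_of_lt (by omega : j.val - m < m),
        Nat.cast_sub h, hjj]
      linear_combination -hmm
  -- part (a)
  have hIcc : ∑ l ∈ Finset.Icc 2 (m - 1), f (l : ZMod (2 * m))
      = ∑ l ∈ Finset.range (m - 2), f ((2 + l : ℕ) : ZMod (2 * m)) := by
    rw [← Finset.Ico_add_one_right_eq_Icc, (by omega : m - 1 + 1 = m), Finset.sum_Ico_eq_sum_range]
  have parta : ∑ l ∈ Finset.Icc 2 (m - 1), f (l : ZMod (2 * m)) =
      φ (Pi.single (Sum.inr (Sum.inr (1 : ZMod (2 * m)))) 1)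
        - φ (Pi.single (Sum.inl (1 : ZMod m)) 1) := by
    rw [hφc, hφa, hval1, Nat.cast_one]
    have h1 : ∀ l ∈ Finset.range (m - 1), f ((1 : ZMod (2 * m)) + (l : ZMod (2 * m)))
        = f (((1 + l : ℕ)) : ZMod (2 * m)) := by
      intro l _; congr 1; push_cast; ring
    rw [Finset.sum_congr rfl h1, hIcc]
    have h3 := Finset.sum_range_succ' (fun l : ℕ => f (((1 + l : ℕ)) : ZMod (2 * m))) (m - 2)
    rw [(by omega : m - 2 + 1 = m - 1)] at h3
    have h4 : ∀ l ∈ Finset.range (m - 2), f (((1 + (l + 1) : ℕ)) : ZMod (2 * m))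
        = f (((2 + l : ℕ)) : ZMod (2 * m)) := by
      intro l _
      have : 1 + (l + 1) = 2 + l := by omega
      rw [this]
    rw [Finset.sum_congr rfl h4] at h3
    simp only [Nat.add_zero, Nat.cast_one] at h3
    have hcomm : (1 : ZMod (2 * m)) + (m : ZMod (2 * m)) = (m : ZMod (2 * m)) + 1 :=
      add_comm _ _
    rw [hcomm]
    linear_combination -h3
  have partb : f (m : ZMod (2 * m)) + f ((m : ZMod (2 * m)) + 2) =
      -φ (Pi.single (Sum.inr (Sum.inr (1 : ZMod (2 * m)))) 1)
        + φ (Pi.single (Sum.inl (1 : ZMod m)) 1)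
        + φ (Pi.single (Sum.inr (Sum.inr (2 : ZMod (2 * m)))) 1) := by
    have h := hkey (m : ZMod (2 * m)) 1 2 1 (by linear_combination -hmm) (by norm_num)
      (by left; rw [hval1, Nat.cast_one])
    exact h.symm
  -- part (d)
  have hquad : ∀ i : ZMod (2 * m), f i + f (i + 1) + f (i + 2) + f (i + 3) ∈ S := by
    intro i
    have h := S.add_mem (hpair i) (hpair (i + 1))
    have e : i + 1 + 2 = i + 3 := by ring
    rw [e] at h
    have e2 : f i + f (i + 1) + f (i + 2) + f (i + 3)
        = (f i + f (i + 2)) + (f (i + 1) + f (i + 3)) := by ring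
    rw [e2]
    exact h
  -- stepping by 2 preserves membership
  have hstep : ∀ (a k : ℕ), f ((a : ℕ) : ZMod (2 * m)) ∈ S →
      f ((a + 2 * k : ℕ) : ZMod (2 * m)) ∈ S := by
    intro a k
    induction k with
    | zero => intro h; simpa using h
    | succ k ih =>
      intro h
      have h2 := ih h
      have hp := hpair ((a + 2 * k : ℕ) : ZMod (2 * m))
      have e : ((a + 2 * k : ℕ) : ZMod (2 * m)) + 2 = ((a + 2 * (k + 1) : ℕ) : ZMod (2 * m)) := by
        push_cast; ring
      rw [e] at hp
      have e2 : f ((a + 2 * (k + 1) : ℕ) : ZMod (2 * m))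
          = (f ((a + 2 * k : ℕ) : ZMod (2 * m)) + f ((a + 2 * (k + 1) : ℕ) : ZMod (2 * m)))
            - f ((a + 2 * k : ℕ) : ZMod (2 * m)) := by ring
      rw [e2]
      exact S.sub_mem hp h2
  -- blocks of four
  have hblock : ∀ (k j : ℕ),
      (∑ l ∈ Finset.range (4 * k), f ((j + l : ℕ) : ZMod (2 * m))) ∈ S := by
    intro k
    induction k with
    | zero => intro j; simpa using S.zero_mem
    | succ k ih =>
      intro j
      rw [(by ring : 4 * (k + 1) = 4 * k + 1 + 1 + 1 + 1), Finset.sum_range_succ,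
        Finset.sum_range_succ, Finset.sum_range_succ, Finset.sum_range_succ]
      have hq := hquad ((j + 4 * k : ℕ) : ZMod (2 * m))
      have e1 : ((j + 4 * k : ℕ) : ZMod (2 * m)) + 1 = ((j + (4 * k + 1) : ℕ) : ZMod (2 * m)) := by
        push_cast; ring
      have e2 : ((j + 4 * k : ℕ) : ZMod (2 * m)) + 2 =
          ((j + (4 * k + 1 + 1) : ℕ) : ZMod (2 * m)) := by push_cast; ring
      have e3 : ((j + 4 * k : ℕ) : ZMod (2 * m)) + 3 =
          ((j + (4 * k + 1 + 1 + 1) : ℕ) : ZMod (2 * m)) := by push_cast; ring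
      rw [e1, e2, e3] at hq
      have e4 : (∑ l ∈ Finset.range (4 * k), f ((j + l : ℕ) : ZMod (2 * m)))
            + f ((j + 4 * k : ℕ) : ZMod (2 * m)) + f ((j + (4 * k + 1) : ℕ) : ZMod (2 * m))
            + f ((j + (4 * k + 1 + 1) : ℕ) : ZMod (2 * m))
            + f ((j + (4 * k + 1 + 1 + 1) : ℕ) : ZMod (2 * m))
          = (∑ l ∈ Finset.range (4 * k), f ((j + l : ℕ) : ZMod (2 * m)))
            + (f ((j + 4 * k : ℕ) : ZMod (2 * m)) + f ((j + (4 * k + 1) : ℕ) : ZMod (2 * m))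
              + f ((j + (4 * k + 1 + 1) : ℕ) : ZMod (2 * m))
              + f ((j + (4 * k + 1 + 1 + 1) : ℕ) : ZMod (2 * m))) := by ring
      rw [e4]
      exact S.add_mem (ih j) hq
  have hA : (∑ l ∈ Finset.Icc 2 (m - 1), f (l : ZMod (2 * m))) ∈ S := by
    rw [parta]
    exact S.sub_mem (LinearMap.mem_range_self φ _) (LinearMap.mem_range_self φ _)
  -- part (e)
  have he1 : m % 4 = 1 → f 1 ∈ S := by
    intro hm4
    set s := (m - 5) / 4 with hsdef
    have hs : m - 2 = 4 * s + 1 + 1 + 1 := by omega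
    have hA2 : (∑ l ∈ Finset.range (4 * s + 1 + 1 + 1), f ((2 + l : ℕ) : ZMod (2 * m))) ∈ S := by
      rw [← hs, ← hIcc]; exact hA
    rw [Finset.sum_range_succ, Finset.sum_range_succ, Finset.sum_range_succ] at hA2
    have hbl := hblock s 2
    have h5 : f ((2 + 4 * s : ℕ) : ZMod (2 * m)) + f ((2 + (4 * s + 1) : ℕ) : ZMod (2 * m))
        + f ((2 + (4 * s + 1 + 1) : ℕ) : ZMod (2 * m)) ∈ S := by
      have e : f ((2 + 4 * s : ℕ) : ZMod (2 * m)) + f ((2 + (4 * s + 1) : ℕ) : ZMod (2 * m))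
            + f ((2 + (4 * s + 1 + 1) : ℕ) : ZMod (2 * m))
          = ((∑ l ∈ Finset.range (4 * s), f ((2 + l : ℕ) : ZMod (2 * m)))
              + f ((2 + 4 * s : ℕ) : ZMod (2 * m)) + f ((2 + (4 * s + 1) : ℕ) : ZMod (2 * m))
              + f ((2 + (4 * s + 1 + 1) : ℕ) : ZMod (2 * m)))
            - (∑ l ∈ Finset.range (4 * s), f ((2 + l : ℕ) : ZMod (2 * m))) := by ring
      rw [e]
      exact S.sub_mem hA2 hbl
    have hp := hpair ((2 + 4 * s : ℕ) : ZMod (2 * m))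
    have e' : ((2 + 4 * s : ℕ) : ZMod (2 * m)) + 2 = ((2 + (4 * s + 1 + 1) : ℕ) : ZMod (2 * m)) := by
      push_cast; ring
    rw [e'] at hp
    have h6 : f ((2 + (4 * s + 1) : ℕ) : ZMod (2 * m)) ∈ S := by
      have e2 : f ((2 + (4 * s + 1) : ℕ) : ZMod (2 * m))
          = (f ((2 + 4 * s : ℕ) : ZMod (2 * m)) + f ((2 + (4 * s + 1) : ℕ) : ZMod (2 * m))
              + f ((2 + (4 * s + 1 + 1) : ℕ) : ZMod (2 * m)))
            - (f ((2 + 4 * s : ℕ) : ZMod (2 * m))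
              + f ((2 + (4 * s + 1 + 1) : ℕ) : ZMod (2 * m))) := by ring
      rw [e2]
      exact S.sub_mem h5 hp
    have h7 := hstep (2 + (4 * s + 1)) ((m + 3) / 2) h6
    rw [(by omega : 2 + (4 * s + 1) + 2 * ((m + 3) / 2) = 2 * m + 1)] at h7
    rwa [Nat.cast_add, ZMod.natCast_self, Nat.cast_one, zero_add] at h7
  -- part (f)
  have he2 : m % 4 = 3 → f 2 ∈ S := by
    intro hm4
    set s := (m - 3) / 4 with hsdef
    have hs : m - 2 = 4 * s + 1 := by omega
    have hA2 : (∑ l ∈ Finset.range (4 * s + 1), f ((2 + l : ℕ) : ZMod (2 * m))) ∈ S := by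
      rw [← hs, ← hIcc]; exact hA
    rw [Finset.sum_range_succ] at hA2
    have h6 : f ((2 + 4 * s : ℕ) : ZMod (2 * m)) ∈ S := by
      have e : f ((2 + 4 * s : ℕ) : ZMod (2 * m))
          = ((∑ l ∈ Finset.range (4 * s), f ((2 + l : ℕ) : ZMod (2 * m)))
              + f ((2 + 4 * s : ℕ) : ZMod (2 * m)))
            - (∑ l ∈ Finset.range (4 * s), f ((2 + l : ℕ) : ZMod (2 * m))) := by ring
      rw [e]
      exact S.sub_mem hA2 (hblock s 2)
    have h7 := hstep (2 + 4 * s) ((m + 3) / 2) h6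
    rw [(by omega : 2 + 4 * s + 2 * ((m + 3) / 2) = 2 * m + 2)] at h7
    rwa [Nat.cast_add, ZMod.natCast_self, zero_add, Nat.cast_ofNat] at h7
  -- all f i are in the image
  have hall : ∀ i : ZMod (2 * m), f i ∈ S := by
    have h14 : m % 4 = 1 ∨ m % 4 = 3 := by omega
    have h12 : f 1 ∈ S ∧ f 2 ∈ S := by
      rcases h14 with h | h
      · have h1 : f 1 ∈ S := he1 h
        have hα := LinearMap.mem_range_self φ (Pi.single (Sum.inl (1 : ZMod m)) 1)
        rw [hφa, hval1, Nat.cast_one] at hα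
        have h2 : f ((m : ZMod (2 * m)) + 1) ∈ S := by
          have e : f ((m : ZMod (2 * m)) + 1)
              = (f 1 + f ((m : ZMod (2 * m)) + 1)) - f 1 := by ring
          rw [e]
          exact S.sub_mem hα h1
        have em : (m : ZMod (2 * m)) + 1 = ((m + 1 : ℕ) : ZMod (2 * m)) := by push_cast; ring
        rw [em] at h2
        have h3 := hstep (m + 1) ((m + 1) / 2) h2
        rw [(by omega : m + 1 + 2 * ((m + 1) / 2) = 2 * m + 2)] at h3
        rw [Nat.cast_add, ZMod.natCast_self, zero_add, Nat.cast_ofNat] at h3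
        exact ⟨h1, h3⟩
      · have h2 : f 2 ∈ S := he2 h
        have hv2 : ((2 : ℕ) : ZMod m).val = 2 := by
          rw [ZMod.val_natCast, Nat.mod_eq_of_lt (by omega)]
        have hα := LinearMap.mem_range_self φ (Pi.single (Sum.inl ((2 : ℕ) : ZMod m)) 1)
        rw [hφa, hv2, Nat.cast_ofNat] at hα
        have h3 : f ((m : ZMod (2 * m)) + 2) ∈ S := by
          have e : f ((m : ZMod (2 * m)) + 2)
              = (f 2 + f ((m : ZMod (2 * m)) + 2)) - f 2 := by ring
          rw [e]
          exact S.sub_mem hα h2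
        have em : (m : ZMod (2 * m)) + 2 = ((m + 2 : ℕ) : ZMod (2 * m)) := by push_cast; ring
        rw [em] at h3
        have h4 := hstep (m + 2) ((m - 1) / 2) h3
        rw [(by omega : m + 2 + 2 * ((m - 1) / 2) = 2 * m + 1)] at h4
        rw [Nat.cast_add, ZMod.natCast_self, Nat.cast_one, zero_add] at h4
        exact ⟨h4, h2⟩
    have hf1' : f ((1 : ℕ) : ZMod (2 * m)) ∈ S := by rw [Nat.cast_one]; exact h12.1
    have hf2' : f ((2 : ℕ) : ZMod (2 * m)) ∈ S := by rw [Nat.cast_ofNat]; exact h12.2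
    intro i
    have hi : ((i.val : ℕ) : ZMod (2 * m)) = i := ZMod.natCast_rightInverse i
    rcases Nat.even_or_odd i.val with he | ho
    · obtain ⟨u, hu⟩ := he
      have h3 := hstep 2 ((i.val + 2 * m - 2) / 2) hf2'
      rw [(by omega : 2 + 2 * ((i.val + 2 * m - 2) / 2) = i.val + 2 * m)] at h3
      rwa [Nat.cast_add, ZMod.natCast_self, add_zero, hi] at h3
    · obtain ⟨u, hu⟩ := ho
      have h3 := hstep 1 ((i.val - 1) / 2) hf1'
      rw [(by omega : 1 + 2 * ((i.val - 1) / 2) = i.val)] at h3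
      rwa [hi] at h3
  -- the span equality
  have hspan : S = Submodule.span ℤ (Set.range f) := by
    refine le_antisymm ?_ ?_
    · rintro x ⟨v, rfl⟩
      have hv : (∑ b : ZMod m ⊕ ZMod m ⊕ ZMod (2 * m), v b • Pi.single b (1 : ℤ)) = v := by
        simp [← Pi.single_smul, Finset.univ_sum_single]
      rw [← hv, map_sum]
      refine Submodule.sum_mem _ fun b _ => ?_
      rw [map_smul]
      refine Submodule.smul_mem _ _ ?_
      rcases b with i | i | j
      · rw [hφa]
        exact Submodule.add_mem _ (Submodule.subset_span ⟨_, rfl⟩)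
          (Submodule.subset_span ⟨_, rfl⟩)
      · rw [hφb]
        exact Submodule.neg_mem _ (Submodule.add_mem _ (Submodule.subset_span ⟨_, rfl⟩)
          (Submodule.subset_span ⟨_, rfl⟩))
      · rw [hφc]
        exact Submodule.add_mem _
          (Submodule.sum_mem _ fun l _ => Submodule.subset_span ⟨_, rfl⟩)
          (Submodule.subset_span ⟨_, rfl⟩)
    · rw [Submodule.span_le]
      rintro x ⟨i, rfl⟩
      exact hall i
  exact ⟨parta, partb, hpair, hquad, he1, he2, hspan⟩
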